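/- Dictatorial preequalization: For every index i : Fin n: (a) Q * (Matrix.updateCol L i 𝟙) equals the matrix whose (r, c) entry is 1 if c = i and 0 otherwise; (b) for every ξ : ℝ, Q * (Matrix.updateCol L i (fun k => L k i + ξ)) equals the matrix whose (r, c) entry is ξ if c = i and 0 otherwise. Consequently, preequalizing an initial vector x by L⁽ⁱ⁾ (respectively M⁽ⁱ⁾_ξ) and then iterating P brings every agent's opinion to x i (respectively ξ · x i). -/

import Mathlib

open Filter Matrix

theorem qp_eq_q {n : ℕ} (P Q : Matrix (Fin n) (Fin n) ℝ)
    (hconv : Tendsto (fun k => P ^ k) atTop (nhds Q)) : Q * P = Q := by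
  have h1 : Tendsto (fun k => P ^ (k + 1)) atTop (nhds Q) :=
    hconv.comp (tendsto_add_atTop_nat 1)
  have h2 : Tendsto (fun k => P ^ k * P) atTop (nhds (Q * P)) := by
    have hc : Continuous fun M : Matrix (Fin n) (Fin n) ℝ => M * P :=
      continuous_id.matrix_mul continuous_const
    exact (hc.tendsto Q).comp hconv
  simp only [pow_succ] at h1
  exact tendsto_nhds_unique h2 h1

theorem q_row_sum {n : ℕ} (P Q : Matrix (Fin n) (Fin n) ℝ)
    (hProw : ∀ i, ∑ j, P i j = 1)
    (hconv : Tendsto (fun k => P ^ k) atTop (nhds Q)) (r : Fin n) :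
    ∑ j, Q r j = 1 := by
  have hrow : ∀ k, ∑ j, (P ^ k) r j = 1 := by
    intro k
    induction k with
    | zero => simp [Matrix.one_apply, Finset.sum_ite_eq]
    | succ m ih =>
      rw [pow_succ]
      simp only [Matrix.mul_apply]
      rw [Finset.sum_comm]
      calc ∑ l, ∑ j, (P ^ m) r l * P l j
          = ∑ l, (P ^ m) r l * ∑ j, P l j := by
            simp [Finset.mul_sum]
        _ = 1 := by simp [hProw, ih]
  have h2 : Tendsto (fun k => ∑ j, (P ^ k) r j) atTop (nhds (∑ j, Q r j)) := by
    apply tendsto_finset_sum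
    intro j _
    exact ((continuous_apply j).comp (continuous_apply r)).tendsto Q |>.comp hconv
  have h3 : Tendsto (fun k => ∑ j, (P ^ k) r j) atTop (nhds 1) := by
    simp only [hrow]; exact tendsto_const_nhds
  exact tendsto_nhds_unique h2 h3

/-- Dictatorial preequalization: `Q * L⁽ⁱ⁾` is the 0-1 matrix whose `i`-th
column is all ones, `Q * M⁽ⁱ⁾_ξ` is the matrix whose `i`-th column is all `ξ`,
and the corresponding two-stage procedures bring every opinion to `x i`
(resp. `ξ * x i`). -/
theorem dictatorial_preequalization
    (n : ℕ) (hn : 0 < n) (P Q : Matrix (Fin n) (Fin n) ℝ)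
    (hPnonneg : ∀ i j, 0 ≤ P i j) (hProw : ∀ i, ∑ j, P i j = 1)
    (hconv : Tendsto (fun k => P ^ k) atTop (nhds Q)) (i : Fin n) :
    Q * Matrix.updateCol (1 - P) i (fun _ => (1 : ℝ)) =
      Matrix.of (fun _ c => if c = i then (1 : ℝ) else 0) ∧
    (∀ ξ : ℝ,
      Q * Matrix.updateCol (1 - P) i (fun k => (1 - P) k i + ξ) =
        Matrix.of (fun _ c => if c = i then ξ else 0)) ∧
    (∀ (x : Fin n → ℝ) (r : Fin n),
      (Q * Matrix.updateCol (1 - P) i (fun _ => (1 : ℝ))).mulVec x r = x i) ∧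
    (∀ (ξ : ℝ) (x : Fin n → ℝ) (r : Fin n),
      (Q * Matrix.updateCol (1 - P) i (fun k => (1 - P) k i + ξ)).mulVec x r
        = ξ * x i) := by
  have hQP : Q * P = Q := qp_eq_q P Q hconv
  have hQrow : ∀ r, ∑ j, Q r j = 1 := q_row_sum P Q hProw hconv
  have hQL : Q * (1 - P) = 0 := by
    rw [mul_sub, mul_one, hQP, sub_self]
  have hQLe : ∀ r c, ∑ k, Q r k * ((1 : Matrix (Fin n) (Fin n) ℝ) k c - P k c) = 0 := by
    intro r c
    have := congrFun (congrFun hQL r) c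
    simpa [Matrix.mul_apply, Matrix.sub_apply] using this
  have hA : Q * Matrix.updateCol (1 - P) i (fun _ => (1 : ℝ)) =
      Matrix.of (fun _ c => if c = i then (1 : ℝ) else 0) := by
    ext r c
    simp only [Matrix.mul_apply, Matrix.updateCol_apply, Matrix.of_apply]
    by_cases hc : c = i
    · simp [hc, hQrow r]
    · simp [hc, hQLe r c]
  have hB : ∀ ξ : ℝ,
      Q * Matrix.updateCol (1 - P) i (fun k => (1 - P) k i + ξ) =
        Matrix.of (fun _ c => if c = i then ξ else 0) := by
    intro ξ
    ext r c
    simp only [Matrix.mul_apply, Matrix.updateCol_apply, Matrix.of_apply]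
    by_cases hc : c = i
    · subst hc
      simp only [if_pos rfl, if_true, Matrix.sub_apply, mul_add, Finset.sum_add_distrib,
        ← Finset.sum_mul, hQLe r c, hQrow r, zero_add, one_mul]
    · simp [hc, hQLe r c]
  refine ⟨hA, hB, ?_, ?_⟩
  · intro x r
    rw [hA]
    simp [Matrix.mulVec, dotProduct, Finset.sum_ite_eq]
  · intro ξ x r
    rw [hB ξ]
    simp [Matrix.mulVec, dotProduct, Finset.sum_ite_eq]
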